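/- Let P, Q be finite sets in R^d/R·1 and k_1 ≠ k_2 indices with i(p) = k_1, j(p) = k_2 for all p ∈ P and i(q) = k_2, j(q) = k_1 for all q ∈ Q. Then the hard margin tropical SVM linear program is feasible if and only if max_{p∈P}(p_{k_2} - p_{k_1}) ≤ min_{q∈Q}(q_{k_2} - q_{k_1}); and when feasible, the optimal margin equals (1/2)( min_{p∈P}(p_{k_1} - p_{k_2}) + min_{q∈Q}(q_{k_2} - q_{k_1}) ). -/

import Mathlib

/-- Theorem 4.3: case `i(p)=k₁, j(p)=k₂` on `P` and `i(q)=k₂, j(q)=k₁`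
on `Q`. The hard margin tropical SVM linear program is feasible iff
`max_{p∈P}(p_{k₂} - p_{k₁}) ≤ min_{q∈Q}(q_{k₂} - q_{k₁})`, and when feasible the
optimal margin equals `(min_{p∈P}(p_{k₁}-p_{k₂}) + min_{q∈Q}(q_{k₂}-q_{k₁}))/2`. -/
theorem hard_margin_case3_feasible_and_optimal {d : ℕ}
    (P Q : Finset (Fin d → ℝ)) (hP : P.Nonempty) (hQ : Q.Nonempty)
    (k₁ k₂ : Fin d) (hk : k₁ ≠ k₂) :
    ((∃ (z : ℝ) (ω : Fin d → ℝ),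
      (∀ p ∈ P, z + p k₂ + ω k₂ - p k₁ - ω k₁ ≤ 0 ∧
        ω k₂ - ω k₁ ≤ p k₁ - p k₂ ∧
        ∀ l : Fin d, l ≠ k₁ → l ≠ k₂ → ω l - ω k₂ ≤ p k₂ - p l) ∧
      (∀ q ∈ Q, z + q k₁ + ω k₁ - q k₂ - ω k₂ ≤ 0 ∧
        ω k₁ - ω k₂ ≤ q k₂ - q k₁ ∧
        ∀ l : Fin d, l ≠ k₁ → l ≠ k₂ → ω l - ω k₁ ≤ q k₁ - q l))
    ↔ (P.sup' hP fun p => p k₂ - p k₁) ≤ Q.inf' hQ fun q => q k₂ - q k₁) ∧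
    ((P.sup' hP fun p => p k₂ - p k₁) ≤ (Q.inf' hQ fun q => q k₂ - q k₁) →
      IsGreatest
        {z : ℝ | ∃ ω : Fin d → ℝ,
          (∀ p ∈ P, z + p k₂ + ω k₂ - p k₁ - ω k₁ ≤ 0 ∧
            ω k₂ - ω k₁ ≤ p k₁ - p k₂ ∧
            ∀ l : Fin d, l ≠ k₁ → l ≠ k₂ → ω l - ω k₂ ≤ p k₂ - p l) ∧
          (∀ q ∈ Q, z + q k₁ + ω k₁ - q k₂ - ω k₂ ≤ 0 ∧
            ω k₁ - ω k₂ ≤ q k₂ - q k₁ ∧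
            ∀ l : Fin d, l ≠ k₁ → l ≠ k₂ → ω l - ω k₁ ≤ q k₁ - q l)}
        (((P.inf' hP fun p => p k₁ - p k₂) + (Q.inf' hQ fun q => q k₂ - q k₁)) / 2)) := by
  set A := P.inf' hP fun p => p k₁ - p k₂ with hAdef
  set B := Q.inf' hQ fun q => q k₂ - q k₁ with hBdef
  have hApt : ∀ p ∈ P, A ≤ p k₁ - p k₂ := fun p hp => Finset.inf'_le _ hp
  have hBpt : ∀ q ∈ Q, B ≤ q k₂ - q k₁ := fun q hq => Finset.inf'_le _ hq
  -- key construction when feasible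
  have construct : (P.sup' hP fun p => p k₂ - p k₁) ≤ B →
      ∃ ω : Fin d → ℝ,
        (∀ p ∈ P, (A + B) / 2 + p k₂ + ω k₂ - p k₁ - ω k₁ ≤ 0 ∧
          ω k₂ - ω k₁ ≤ p k₁ - p k₂ ∧
          ∀ l : Fin d, l ≠ k₁ → l ≠ k₂ → ω l - ω k₂ ≤ p k₂ - p l) ∧
        (∀ q ∈ Q, (A + B) / 2 + q k₁ + ω k₁ - q k₂ - ω k₂ ≤ 0 ∧
          ω k₁ - ω k₂ ≤ q k₂ - q k₁ ∧
          ∀ l : Fin d, l ≠ k₁ → l ≠ k₂ → ω l - ω k₁ ≤ q k₁ - q l) := by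
    intro hfeas
    have hAB : 0 ≤ A + B := by
      obtain ⟨p, hp⟩ := id hP
      rw [Finset.sup'_le_iff] at hfeas
      have h1 : -A ≤ B := by
        rw [hAdef, neg_le]
        apply Finset.le_inf'
        intro p hp
        have := hfeas p hp
        linarith
      linarith
    refine ⟨fun l => if l = k₁ then 0 else if l = k₂ then (A - B) / 2 else
      ((P.inf' hP fun p => (A - B) / 2 + p k₂ - p l) ⊓
        (Q.inf' hQ fun q => q k₁ - q l)), ?_, ?_⟩
    · intro p hp
      have h1 := hApt p hp
      simp only [hk, hk.symm, if_true, if_false, if_neg hk, if_neg hk.symm, if_pos rfl]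
      refine ⟨by linarith, by linarith, ?_⟩
      intro l hl1 hl2
      simp only [if_neg hl1, if_neg hl2]
      have h2 : ((P.inf' hP fun p => (A - B) / 2 + p k₂ - p l) ⊓
          (Q.inf' hQ fun q => q k₁ - q l)) ≤ (A - B) / 2 + p k₂ - p l :=
        le_trans inf_le_left (Finset.inf'_le _ hp)
      linarith
    · intro q hq
      have h1 := hBpt q hq
      simp only [hk, hk.symm, if_true, if_false, if_neg hk, if_neg hk.symm, if_pos rfl]
      refine ⟨by linarith, by linarith, ?_⟩
      intro l hl1 hl2
      simp only [if_neg hl1, if_neg hl2]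
      have h2 : ((P.inf' hP fun p => (A - B) / 2 + p k₂ - p l) ⊓
          (Q.inf' hQ fun q => q k₁ - q l)) ≤ q k₁ - q l :=
        le_trans inf_le_right (Finset.inf'_le _ hq)
      linarith
  constructor
  · constructor
    · rintro ⟨z, ω, hPc, hQc⟩
      rw [Finset.sup'_le_iff]
      intro p hp
      apply Finset.le_inf'
      intro q hq
      have h1 := (hPc p hp).2.1
      have h2 := (hQc q hq).2.1
      linarith
    · intro hfeas
      obtain ⟨ω, h1, h2⟩ := construct hfeas
      exact ⟨(A + B) / 2, ω, h1, h2⟩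
  · intro hfeas
    constructor
    · exact construct hfeas
    · rintro z ⟨ω, hPc, hQc⟩
      have h1 : z + (ω k₂ - ω k₁) ≤ A := by
        apply Finset.le_inf'
        intro p hp
        have := (hPc p hp).1
        linarith
      have h2 : z - (ω k₂ - ω k₁) ≤ B := by
        apply Finset.le_inf'
        intro q hq
        have := (hQc q hq).1
        linarith
      linarith
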